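/- Let p₁,…,pₙ ∈ ℝ³ (n ≥ 3) be points that do not all lie on a single line, let s₁,…,sₙ > 0, s_T = Σᵢ sᵢ, p_c = (1/s_T)·Σᵢ sᵢ pᵢ, and M = Σᵢ sᵢ (pᵢ − p_c)(pᵢ − p_c)ᵀ. Then M is symmetric positive semidefinite with rank(M) ≥ 2, and consequently M̄ = Tr(M)·I₃ − M is symmetric positive definite. -/

import Mathlib

open Matrix Filter

noncomputable section

/-- Skew-symmetric matrix of a vector: `skew ω *ᵥ v = ω ×₃ v`. -/
def skew (ω : Fin 3 → ℝ) : Matrix (Fin 3) (Fin 3) ℝ :=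
  !![0, -ω 2, ω 1; ω 2, 0, -ω 0; -ω 1, ω 0, 0]

/-- Inverse of `skew` on skew-symmetric matrices. -/
def vex (M : Matrix (Fin 3) (Fin 3) ℝ) : Fin 3 → ℝ :=
  ![M 2 1, M 0 2, M 1 0]

/-- Anti-symmetric projection `P_a(M) = (M - Mᵀ)/2`. -/
def Pa (M : Matrix (Fin 3) (Fin 3) ℝ) : Matrix (Fin 3) (Fin 3) ℝ :=
  (1 / 2 : ℝ) • (M - Mᵀ)

/-- `Υ(M) = vex (P_a M)`. -/
def Upsilon (M : Matrix (Fin 3) (Fin 3) ℝ) : Fin 3 → ℝ := vex (Pa M)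

/-- `R ∈ SO(3)`. -/
def SO3 (R : Matrix (Fin 3) (Fin 3) ℝ) : Prop :=
  R * Rᵀ = 1 ∧ Rᵀ * R = 1 ∧ R.det = 1

/-- `‖R‖_I = Tr(I₃ - R)/4`. -/
def normI (R : Matrix (Fin 3) (Fin 3) ℝ) : ℝ := Matrix.trace (1 - R) / 4

/-- Squared Euclidean norm of a vector of `ℝ³`. -/
def sqnorm (v : Fin 3 → ℝ) : ℝ := ∑ i, v i ^ 2

/-- The points `p i` all lie on a common affine line of `ℝ³`. -/
def OnCommonLine (n : ℕ) (p : Fin n → Fin 3 → ℝ) : Prop :=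
  ∃ a d : Fin 3 → ℝ, ∀ i, ∃ c : ℝ, p i = a + c • d

/-! ### Auxiliary lemmas -/

lemma wcp_sum_mulVec {ι : Type*} (t : Finset ι) (f : ι → Matrix (Fin 3) (Fin 3) ℝ)
    (x : Fin 3 → ℝ) :
    (∑ i ∈ t, f i) *ᵥ x = ∑ i ∈ t, f i *ᵥ x := by
  funext r
  simp [mulVec, dotProduct, Matrix.sum_apply, Finset.sum_mul, Finset.sum_apply]
  rw [Finset.sum_comm]

lemma wcp_dotProduct_sum {ι : Type*} (t : Finset ι) (x : Fin 3 → ℝ) (f : ι → Fin 3 → ℝ) :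
    x ⬝ᵥ (∑ i ∈ t, f i) = ∑ i ∈ t, x ⬝ᵥ f i := by
  simp [dotProduct, Finset.mul_sum, Finset.sum_apply]
  rw [Finset.sum_comm]

lemma wcp_vecMulVec_mulVec (a b x : Fin 3 → ℝ) :
    vecMulVec a b *ᵥ x = (b ⬝ᵥ x) • a := by
  funext r
  simp [vecMulVec_apply, mulVec, dotProduct, Finset.mul_sum, mul_comm, mul_assoc, mul_left_comm]

lemma wcp_quad_form_eval (sn : ℕ) (s : Fin sn → ℝ) (v : Fin sn → Fin 3 → ℝ) (x : Fin 3 → ℝ) :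
    x ⬝ᵥ ((∑ i, s i • vecMulVec (v i) (v i)) *ᵥ x) = ∑ i, s i * (v i ⬝ᵥ x) ^ 2 := by
  rw [wcp_sum_mulVec, wcp_dotProduct_sum]
  congr 1; funext i
  rw [Matrix.smul_mulVec, wcp_vecMulVec_mulVec]
  simp [dotProduct_smul, dotProduct_comm (v i) x]
  left; ring

lemma wcp_trace_eval (sn : ℕ) (s : Fin sn → ℝ) (v : Fin sn → Fin 3 → ℝ) :
    Matrix.trace (∑ i, s i • vecMulVec (v i) (v i)) = ∑ i, s i * (v i ⬝ᵥ v i) := by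
  rw [Matrix.trace_sum]
  congr 1; funext i
  rw [Matrix.trace_smul]
  simp [Matrix.trace, Matrix.diag, vecMulVec_apply, dotProduct, smul_eq_mul, Finset.mul_sum]

lemma wcp_cs_ineq (a x : Fin 3 → ℝ) : (a ⬝ᵥ x) ^ 2 ≤ (a ⬝ᵥ a) * (x ⬝ᵥ x) := by
  have := Finset.sum_mul_sq_le_sq_mul_sq Finset.univ a x
  simpa [dotProduct, sq] using this

lemma wcp_aux_real (A X P : ℝ) (hX : 0 < X) (h : P ^ 2 = A * X) :
    A - 2 * (P / X) * P + (P / X) ^ 2 * X = 0 := by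
  field_simp
  nlinarith [h]

lemma wcp_cs_eq_case {a x : Fin 3 → ℝ} (hx : x ≠ 0)
    (h : (a ⬝ᵥ x) ^ 2 = (a ⬝ᵥ a) * (x ⬝ᵥ x)) : ∃ c : ℝ, a = c • x := by
  have hxx : 0 < x ⬝ᵥ x := by
    have h0 : x ⬝ᵥ x ≠ 0 := fun hh => hx (dotProduct_self_eq_zero.1 hh)
    have := Finset.sum_nonneg (fun i (_ : i ∈ Finset.univ) => mul_self_nonneg (x i))
    exact lt_of_le_of_ne (by simpa [dotProduct] using this) (Ne.symm h0)
  set c : ℝ := (a ⬝ᵥ x) / (x ⬝ᵥ x) with hc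
  refine ⟨c, ?_⟩
  have e1 : ∑ i : Fin 3, (a i - c * x i) ^ 2
      = (a ⬝ᵥ a) - 2 * c * (a ⬝ᵥ x) + c ^ 2 * (x ⬝ᵥ x) := by
    simp [dotProduct, Fin.sum_univ_three]; ring
  have e2 : (a ⬝ᵥ a) - 2 * c * (a ⬝ᵥ x) + c ^ 2 * (x ⬝ᵥ x) = 0 := by
    rw [hc]; exact wcp_aux_real _ _ _ hxx h
  have e3 : ∑ i : Fin 3, (a i - c * x i) ^ 2 = 0 := e1.trans e2
  have e4 := (Finset.sum_eq_zero_iff_of_nonneg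
    (fun i (_ : i ∈ Finset.univ) => sq_nonneg (a i - c * x i))).1 e3
  funext i
  have h5 := e4 i (Finset.mem_univ i)
  have h6 : a i - c * x i = 0 := by nlinarith [h5]
  simp only [Pi.smul_apply, smul_eq_mul]; linarith

lemma wcp_exists_indep (n : ℕ) (p : Fin n → Fin 3 → ℝ) (pc : Fin 3 → ℝ)
    (hline : ¬ OnCommonLine n p) :
    ∃ i j, LinearIndependent ℝ ![p i - pc, p j - pc] := by
  set v : Fin n → Fin 3 → ℝ := fun i => p i - pc with hv
  by_contra h
  push_neg at h
  apply hline
  by_cases hz : ∀ i, v i = 0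
  · exact ⟨pc, 0, fun i => ⟨0, by
      have := hz i
      simp only [hv] at this
      have : p i = pc := by rwa [sub_eq_zero] at this
      simp [this]⟩⟩
  · push_neg at hz
    obtain ⟨j, hj⟩ := hz
    refine ⟨pc, v j, fun i => ?_⟩
    have hni := h i j
    rw [LinearIndependent.pair_iff] at hni
    push_neg at hni
    obtain ⟨a, b, hab, hne⟩ := hni
    by_cases ha : a = 0
    · exfalso
      subst ha
      simp only [zero_smul, zero_add] at hab
      have hb : b ≠ 0 := hne rfl
      exact hj (by simpa [hb, smul_eq_zero] using hab)
    · refine ⟨-b / a, ?_⟩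
      have hvi : v i = (-b / a) • v j := by
        funext k
        have hk := congrFun hab k
        simp only [Pi.add_apply, Pi.smul_apply, Pi.zero_apply, smul_eq_mul] at hk
        simp only [Pi.smul_apply, smul_eq_mul]
        field_simp
        linarith
      have hpi : p i = pc + v i := by simp [hv]
      rw [hpi, hvi]

theorem weighted_covariance_posdef (n : ℕ) (hn : 3 ≤ n)
    (p : Fin n → Fin 3 → ℝ) (hline : ¬ OnCommonLine n p)
    (s : Fin n → ℝ) (hs : ∀ i, 0 < s i)
    (sT : ℝ) (hsT : sT = ∑ i, s i)
    (pc : Fin 3 → ℝ) (hpc : pc = (1 / sT) • ∑ i, s i • p i)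
    (M : Matrix (Fin 3) (Fin 3) ℝ)
    (hM : M = ∑ i, s i • vecMulVec (p i - pc) (p i - pc)) :
    M.IsSymm ∧ M.PosSemidef ∧ 2 ≤ M.rank ∧
    (Matrix.trace M • (1 : Matrix (Fin 3) (Fin 3) ℝ) - M).IsHermitian ∧
    (Matrix.trace M • (1 : Matrix (Fin 3) (Fin 3) ℝ) - M).PosDef := by
  set v : Fin n → Fin 3 → ℝ := fun i => p i - pc with hv
  have hMv : M = ∑ i, s i • vecMulVec (v i) (v i) := hM
  have hQ : ∀ x, x ⬝ᵥ (M *ᵥ x) = ∑ i, s i * (v i ⬝ᵥ x) ^ 2 := fun x => by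
    rw [hMv]; exact wcp_quad_form_eval n s v x
  have htr : Matrix.trace M = ∑ i, s i * (v i ⬝ᵥ v i) := by
    rw [hMv]; exact wcp_trace_eval n s v
  obtain ⟨i, j, hij⟩ := wcp_exists_indep n p pc hline
  have hvi0 : v i ≠ 0 := by
    intro h0
    have := (LinearIndependent.pair_iff.1 hij 1 0 (by simp [hv] at h0 ⊢; simp [h0])).1
    norm_num at this
  -- symmetry
  have hsym : M.IsSymm := by
    rw [hMv, Matrix.IsSymm]
    ext a b
    simp [Matrix.sum_apply, Matrix.vecMulVec_apply, mul_comm]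
  have hherm : M.IsHermitian := by
    rw [Matrix.IsHermitian, Matrix.conjTranspose_eq_transpose_of_trivial]
    exact hsym
  have hpsd : M.PosSemidef := by
    refine Matrix.posSemidef_iff_dotProduct_mulVec.2 ⟨hherm, fun x => ?_⟩
    rw [star_trivial, hQ]
    exact Finset.sum_nonneg fun k _ => mul_nonneg (hs k).le (sq_nonneg _)
  -- rank
  have hrank : 2 ≤ M.rank := by
    set A : Matrix (Fin 3) (Fin 2) ℝ := Matrix.of fun r c => ![v i, v j] c r with hA
    have hAx : ∀ x : Fin 2 → ℝ, A *ᵥ x = x 0 • v i + x 1 • v j := by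
      intro x
      funext r
      simp [hA, Matrix.mulVec, dotProduct, Fin.sum_univ_two, mul_comm]
    have hAinj : ∀ x : Fin 2 → ℝ, A *ᵥ x = 0 → x = 0 := by
      intro x hx
      rw [hAx] at hx
      have h2 := LinearIndependent.pair_iff.1 hij (x 0) (x 1) hx
      funext k
      fin_cases k <;> simp [h2.1, h2.2]
    have hN : (Aᵀ * M * A).PosDef := by
      refine Matrix.posDef_iff_dotProduct_mulVec.2 ⟨?_, ?_⟩
      · have := Matrix.isHermitian_conjTranspose_mul_mul A hherm
        rwa [Matrix.conjTranspose_eq_transpose_of_trivial] at this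
      · intro x hx
        rw [star_trivial]
        have hmv : (Aᵀ * M * A) *ᵥ x = Aᵀ *ᵥ (M *ᵥ (A *ᵥ x)) := by
          rw [← Matrix.mulVec_mulVec, ← Matrix.mulVec_mulVec]
        rw [hmv, Matrix.dotProduct_mulVec, Matrix.vecMul_transpose]
        set w := A *ᵥ x with hw
        have hw0 : w ≠ 0 := fun h0 => hx (hAinj x h0)
        rw [hQ w]
        have hkey : (v i ⬝ᵥ w ≠ 0) ∨ (v j ⬝ᵥ w ≠ 0) := by
          by_contra hcon
          push_neg at hcon
          apply hw0
          have hww : w ⬝ᵥ w = 0 := by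
            nth_rewrite 1 [hw, hAx]
            rw [add_dotProduct, smul_dotProduct, smul_dotProduct,
              hcon.1, hcon.2]
            simp
          exact dotProduct_self_eq_zero.1 hww
        have hnn : ∀ k ∈ Finset.univ, 0 ≤ s k * (v k ⬝ᵥ w) ^ 2 :=
          fun k _ => mul_nonneg (hs k).le (sq_nonneg _)
        rcases hkey with hk | hk
        · exact Finset.sum_pos' hnn ⟨i, Finset.mem_univ i,
            mul_pos (hs i) (by positivity)⟩
        · exact Finset.sum_pos' hnn ⟨j, Finset.mem_univ j,
            mul_pos (hs j) (by positivity)⟩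
    have hunit : IsUnit (Aᵀ * M * A) := hN.isUnit
    have hrk2 : (Aᵀ * M * A).rank = 2 := by
      rw [Matrix.rank_of_isUnit _ hunit]
      simp
    calc (2 : ℕ) = (Aᵀ * M * A).rank := hrk2.symm
      _ = (Aᵀ * (M * A)).rank := by rw [Matrix.mul_assoc]
      _ ≤ (M * A).rank := Matrix.rank_mul_le_right _ _
      _ ≤ M.rank := Matrix.rank_mul_le_left _ _
  -- Mbar
  have hMbsym : (Matrix.trace M • (1 : Matrix (Fin 3) (Fin 3) ℝ) - M)ᵀ
      = Matrix.trace M • (1 : Matrix (Fin 3) (Fin 3) ℝ) - M := by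
    rw [Matrix.transpose_sub, Matrix.transpose_smul, Matrix.transpose_one, hsym]
  have hMbherm : (Matrix.trace M • (1 : Matrix (Fin 3) (Fin 3) ℝ) - M).IsHermitian := by
    rw [Matrix.IsHermitian, Matrix.conjTranspose_eq_transpose_of_trivial]
    exact hMbsym
  have hMbquad : ∀ x : Fin 3 → ℝ,
      x ⬝ᵥ ((Matrix.trace M • (1 : Matrix (Fin 3) (Fin 3) ℝ) - M) *ᵥ x)
      = ∑ k, s k * ((v k ⬝ᵥ v k) * (x ⬝ᵥ x) - (v k ⬝ᵥ x) ^ 2) := by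
    intro x
    have h1 : x ⬝ᵥ ((Matrix.trace M • (1 : Matrix (Fin 3) (Fin 3) ℝ) - M) *ᵥ x)
        = Matrix.trace M * (x ⬝ᵥ x) - x ⬝ᵥ (M *ᵥ x) := by
      rw [Matrix.sub_mulVec, dotProduct_sub, Matrix.smul_mulVec,
        Matrix.one_mulVec, dotProduct_smul, smul_eq_mul]
    rw [h1, hQ, htr, Finset.sum_mul, ← Finset.sum_sub_distrib]
    congr 1; funext k; ring
  have hMbpos : (Matrix.trace M • (1 : Matrix (Fin 3) (Fin 3) ℝ) - M).PosDef := by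
    refine Matrix.posDef_iff_dotProduct_mulVec.2 ⟨hMbherm, fun x hx => ?_⟩
    rw [star_trivial, hMbquad]
    have hnn : ∀ k ∈ Finset.univ, 0 ≤ s k * ((v k ⬝ᵥ v k) * (x ⬝ᵥ x) - (v k ⬝ᵥ x) ^ 2) :=
      fun k _ => mul_nonneg (hs k).le (sub_nonneg.2 (wcp_cs_ineq (v k) x))
    have hnot : ¬ ((v i ⬝ᵥ x) ^ 2 = (v i ⬝ᵥ v i) * (x ⬝ᵥ x)
        ∧ (v j ⬝ᵥ x) ^ 2 = (v j ⬝ᵥ v j) * (x ⬝ᵥ x)) := by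
      rintro ⟨h1, h2⟩
      obtain ⟨ci, hci⟩ := wcp_cs_eq_case hx h1
      obtain ⟨cj, hcj⟩ := wcp_cs_eq_case hx h2
      have hzero : cj • (v i) + (-ci) • (v j) = 0 := by
        rw [hci, hcj]
        funext k
        simp only [Pi.add_apply, Pi.smul_apply, Pi.neg_apply, smul_eq_mul, Pi.zero_apply]
        ring
      have h3 := LinearIndependent.pair_iff.1 hij cj (-ci) hzero
      apply hvi0
      rw [hci, neg_eq_zero.1 h3.2]
      simp
    by_cases hi0 : (v i ⬝ᵥ x) ^ 2 = (v i ⬝ᵥ v i) * (x ⬝ᵥ x)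
    · refine Finset.sum_pos' hnn ⟨j, Finset.mem_univ j, mul_pos (hs j) ?_⟩
      have hj0 : (v j ⬝ᵥ x) ^ 2 ≠ (v j ⬝ᵥ v j) * (x ⬝ᵥ x) := fun h => hnot ⟨hi0, h⟩
      exact sub_pos.2 (lt_of_le_of_ne (wcp_cs_ineq (v j) x) hj0)
    · refine Finset.sum_pos' hnn ⟨i, Finset.mem_univ i, mul_pos (hs i) ?_⟩
      exact sub_pos.2 (lt_of_le_of_ne (wcp_cs_ineq (v i) x) hi0)
  exact ⟨hsym, hpsd, hrank, hMbherm, hMbpos⟩
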